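/- (Upper-confidence direction of Lemma 1.) Suppose μ_m ∈ Φ(L) for all m ∈ [M], the learnability assumption holds with parameters (α, ε_α), every arm is pulled at least τ times in every episode, and the episodes are mutually independent. Let β ∈ (0, α), ε_β > ε_α, ε' := ε_β − ε_α. If τ ≥ (4 / (Δ_x² ε'²)) · ( ln(2K) + 1/(α − β) ), then Pr[ ℓ_β ≤ L − ε_β ] ≤ exp( −(τ Δ_x² ε'² / 4) · (α − β) · M ). -/

import Mathlib

open Real Finset MeasureTheory ProbabilityTheory

noncomputable section

/-- The Lipschitz structure `Φ(L)` for embedding `x`. -/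
def Phi {K D : ℕ} (x : Fin K → EuclideanSpace ℝ (Fin D)) (L : ℝ) : Set (Fin K → ℝ) :=
  {μ | (∀ i, μ i ∈ Set.Icc (0:ℝ) 1) ∧ ∀ i j, |μ i - μ j| ≤ L * dist (x i) (x j)}

/-- `Δ_x`: the minimal distance between two distinct embedded arms. -/
def Δemb {K D : ℕ} (x : Fin K → EuclideanSpace ℝ (Fin D)) : ℝ :=
  sInf {r : ℝ | ∃ i j : Fin K, i ≠ j ∧ r = dist (x i) (x j)}

/-- The tightest Lipschitz constant of a mean vector `a` w.r.t. embedding `x`: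
`max_{i ≠ j} |a(i) − a(j)| / d(i,j)`. -/
def lipConst {K D : ℕ} (x : Fin K → EuclideanSpace ℝ (Fin D)) (a : Fin K → ℝ) : ℝ :=
  sSup {r : ℝ | ∃ i j : Fin K, i ≠ j ∧ r = |a i - a j| / dist (x i) (x j)}

/-- The `k`-th largest value among `f 1, …, f M`. -/
def kthLargest {M : ℕ} (f : Fin M → ℝ) (k : ℕ) : ℝ :=
  sSup {t : ℝ | k ≤ (Finset.univ.filter (fun m => t ≤ f m)).card}

/-- Empirical mean of arm `i` in episode `m`, given rewards `r` indexed by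
episode/arm/pull-index. -/
def empMean {M K : ℕ} {Ω : Type*} {n : Fin M → Fin K → ℕ}
    (r : (Σ m : Fin M, Σ i : Fin K, Fin (n m i)) → Ω → ℝ) (m : Fin M) (i : Fin K)
    (ω : Ω) : ℝ :=
  (∑ s : Fin (n m i), r ⟨m, i, s⟩ ω) / (n m i)

end


lemma bern_log_ineq {p : ℝ} (hp0 : 0 ≤ p) (hp1 : p ≤ 1) (t : ℝ) :
    Real.log (1 - p + p * Real.exp t) - t * p ≤ t ^ 2 / 8 := by
  set φ : ℝ → ℝ := fun u => 1 - p + p * Real.exp u with hφdef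
  have hφpos : ∀ u, 0 < φ u := by
    intro u
    show 0 < 1 - p + p * Real.exp u
    rcases eq_or_lt_of_le hp1 with h | h
    · rw [h]; simpa using Real.exp_pos u
    · have : 0 ≤ p * Real.exp u := mul_nonneg hp0 (Real.exp_pos u).le
      linarith
  have hφd : ∀ u, HasDerivAt φ (p * Real.exp u) u := by
    intro u
    exact ((Real.hasDerivAt_exp u).const_mul p).const_add (1 - p)
  set q : ℝ → ℝ := fun u => p * Real.exp u / φ u with hqdef
  have hqd : ∀ u, HasDerivAt q (p * Real.exp u * (1 - p) / (φ u) ^ 2) u := by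
    intro u
    have h1 : HasDerivAt (fun u => p * Real.exp u) (p * Real.exp u) u :=
      (Real.hasDerivAt_exp u).const_mul p
    have := h1.div (hφd u) (hφpos u).ne'
    refine this.congr_deriv ?_
    rw [div_eq_div_iff (pow_ne_zero 2 (hφpos u).ne') (pow_ne_zero 2 (hφpos u).ne')]
    have h6 : φ u = 1 - p + p * Real.exp u := rfl
    rw [h6]
    ring
  have hq0 : q 0 = p := by
    show p * Real.exp 0 / (1 - p + p * Real.exp 0) = p
    rw [Real.exp_zero, mul_one, sub_add_cancel, div_one]
  have hqlip : ∀ u : ℝ, |q u - p| ≤ |u| / 4 := by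
    intro u
    have hb : ∀ v : ℝ, ‖p * Real.exp v * (1 - p) / (φ v) ^ 2‖ ≤ 1 / 4 := by
      intro v
      have hnum : 0 ≤ p * Real.exp v * (1 - p) :=
        mul_nonneg (mul_nonneg hp0 (Real.exp_pos v).le) (by linarith)
      rw [Real.norm_eq_abs, abs_div, abs_of_nonneg hnum, abs_of_nonneg (sq_nonneg _)]
      rw [div_le_div_iff₀ (pow_pos (hφpos v) 2) (by norm_num)]
      have h4 : 4 * (p * Real.exp v * (1 - p)) ≤ (φ v) ^ 2 := by
        have h6 : φ v = 1 - p + p * Real.exp v := rfl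
        rw [h6]
        nlinarith [sq_nonneg (p * Real.exp v - (1 - p))]
      nlinarith
    have := convex_univ.norm_image_sub_le_of_norm_hasDerivWithin_le
      (fun v _ => (hqd v).hasDerivWithinAt) (fun v _ => hb v) (Set.mem_univ (0:ℝ))
      (Set.mem_univ u)
    rw [hq0, Real.norm_eq_abs, Real.norm_eq_abs, sub_zero] at this
    linarith
  set g : ℝ → ℝ := fun u => u ^ 2 / 8 - (Real.log (φ u) - u * p) with hgdef
  have hgd : ∀ u, HasDerivAt g (u / 4 - (q u - p)) u := by
    intro u
    have h1 : HasDerivAt (fun u : ℝ => u ^ 2 / 8) (u / 4) u := by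
      have := (hasDerivAt_pow 2 u).div_const 8
      refine this.congr_deriv ?_; push_cast; ring
    have h2 : HasDerivAt (fun u => Real.log (φ u)) (q u) u := by
      have := (hφd u).log (hφpos u).ne'
      simpa [hqdef] using this
    have h3 : HasDerivAt (fun u : ℝ => u * p) p u := hasDerivAt_mul_const p
    exact h1.sub (h2.sub h3)
  have hgdiff : Differentiable ℝ g := fun u => (hgd u).differentiableAt
  have hg0 : g 0 = 0 := by simp [hgdef, hφdef]
  have key : 0 ≤ g t := by
    rcases le_total 0 t with ht | ht
    · have hmono : MonotoneOn g (Set.Ici (0:ℝ)) := by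
        apply monotoneOn_of_deriv_nonneg (convex_Ici 0) hgdiff.continuous.continuousOn
          hgdiff.differentiableOn
        intro u hu
        rw [interior_Ici] at hu
        rw [(hgd u).deriv]
        have := (abs_le.mp (hqlip u)).2
        rw [abs_of_nonneg (le_of_lt hu)] at this
        linarith
      have := hmono (Set.self_mem_Ici) (Set.mem_Ici.mpr ht) ht
      rwa [hg0] at this
    · have hanti : AntitoneOn g (Set.Iic (0:ℝ)) := by
        apply antitoneOn_of_deriv_nonpos (convex_Iic 0) hgdiff.continuous.continuousOn
          hgdiff.differentiableOn
        intro u hu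
        rw [interior_Iic] at hu
        rw [(hgd u).deriv]
        have := (abs_le.mp (hqlip u)).1
        rw [abs_of_nonpos (le_of_lt hu)] at this
        linarith
      have := hanti (Set.mem_Iic.mpr ht) (Set.self_mem_Iic) ht
      rwa [hg0] at this
  have : Real.log (φ t) - t * p ≤ t ^ 2 / 8 := by
    simp only [hgdef] at key; linarith
  simpa [hφdef] using this

lemma bern_phi_pos {p : ℝ} (hp0 : 0 ≤ p) (hp1 : p ≤ 1) (t : ℝ) :
    0 < 1 - p + p * Real.exp t := by
  rcases eq_or_lt_of_le hp1 with h | h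
  · rw [h]; simpa using Real.exp_pos t
  · have : 0 ≤ p * Real.exp t := mul_nonneg hp0 (Real.exp_pos t).le
    linarith

lemma integrable_exp_of_bounded {Ω : Type*} [MeasurableSpace Ω] (P : Measure Ω)
    [IsProbabilityMeasure P] {Z : Ω → ℝ} (hZ : Measurable Z) {C : ℝ}
    (hC : ∀ ω, |Z ω| ≤ C) (t : ℝ) :
    Integrable (fun ω => Real.exp (t * Z ω)) P := by
  refine Integrable.mono' (integrable_const (Real.exp (|t| * C)))
    ((hZ.const_mul t).exp.aestronglyMeasurable) (Filter.Eventually.of_forall fun ω => ?_)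
  rw [Real.norm_eq_abs, abs_of_pos (Real.exp_pos _)]
  apply Real.exp_le_exp.mpr
  calc t * Z ω ≤ |t * Z ω| := le_abs_self _
    _ = |t| * |Z ω| := abs_mul _ _
    _ ≤ |t| * C := by
        have := hC ω
        nlinarith [abs_nonneg t, abs_nonneg (Z ω)]

lemma bern_mgf_le {Ω : Type*} [MeasurableSpace Ω] (P : Measure Ω) [IsProbabilityMeasure P]
    {Y : Ω → ℝ} (hY : Measurable Y) (h01 : ∀ ω, Y ω = 0 ∨ Y ω = 1)
    {p : ℝ} (hp0 : 0 ≤ p) (hp1 : p ≤ 1) (hp : P {ω | Y ω = 1} = ENNReal.ofReal p)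
    (t : ℝ) :
    mgf (fun ω => Y ω - p) P t ≤ Real.exp (t ^ 2 / 8) := by
  classical
  have hA : MeasurableSet {ω | Y ω = 1} := hY (measurableSet_singleton 1)
  have hYeq : Y = Set.indicator {ω | Y ω = 1} (fun _ => (1:ℝ)) := by
    funext ω
    rcases h01 ω with h | h
    · rw [h, Set.indicator_apply, if_neg]
      simp only [Set.mem_setOf_eq, h]
      norm_num
    · rw [h, Set.indicator_apply, if_pos (Set.mem_setOf_eq ▸ h)]
  have hYint : Integrable Y P := by
    rw [hYeq]; exact (integrable_const (1:ℝ)).indicator hA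
  have hintY : ∫ ω, Y ω ∂P = p := by
    conv_lhs => rw [show (fun ω => Y ω) = Y from rfl, hYeq]
    rw [integral_indicator_const _ hA, measureReal_def, hp, ENNReal.toReal_ofReal hp0, smul_eq_mul, mul_one]
  have hpoint : (fun ω => Real.exp (t * (Y ω - p)))
      = fun ω => Real.exp (-(t * p)) * (1 + (Real.exp t - 1) * Y ω) := by
    funext ω
    rcases h01 ω with h | h
    · rw [h, show t * ((0:ℝ) - p) = -(t * p) by ring]
      ring
    · rw [h, show (1:ℝ) + (Real.exp t - 1) * 1 = Real.exp t by ring, ← Real.exp_add,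
        show -(t * p) + t = t * (1 - p) by ring]
  have hmgf : mgf (fun ω => Y ω - p) P t
      = Real.exp (-(t * p)) * (1 + (Real.exp t - 1) * p) := by
    rw [mgf]
    simp only [hpoint]
    rw [MeasureTheory.integral_const_mul, integral_add (integrable_const 1) (hYint.const_mul _),
      MeasureTheory.integral_const_mul, hintY]
    simp
  rw [hmgf]
  have hφpos := bern_phi_pos hp0 hp1 t
  have h1 : (1:ℝ) + (Real.exp t - 1) * p = 1 - p + p * Real.exp t := by ring
  rw [h1, ← Real.exp_log hφpos, ← Real.exp_add]
  apply Real.exp_le_exp.mpr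
  have := bern_log_ineq hp0 hp1 t
  linarith

lemma bern_tail {Ω : Type*} [MeasurableSpace Ω] (P : Measure Ω) [IsProbabilityMeasure P]
    {N : ℕ} (Y : Fin N → Ω → ℝ) (hmeas : ∀ s, Measurable (Y s))
    (h01 : ∀ s ω, Y s ω = 0 ∨ Y s ω = 1) {p : ℝ} (hp0 : 0 ≤ p) (hp1 : p ≤ 1)
    (hmean : ∀ s, P {ω | Y s ω = 1} = ENNReal.ofReal p)
    (hind : iIndepFun Y P) {a : ℝ} (ha : 0 ≤ a) :
    (P {ω | (N : ℝ) * a ≤ (∑ s, Y s ω) - N * p}).toReal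
      ≤ Real.exp (-2 * N * a ^ 2) := by
  classical
  set X : Fin N → Ω → ℝ := fun s => (fun v => v - p) ∘ (Y s) with hXdef
  have hXmeas : ∀ s, Measurable (X s) := fun s => (hmeas s).sub measurable_const
  have hXind : iIndepFun X P :=
    hind.comp _ (fun _ => measurable_id.sub measurable_const)
  have hsum : ∀ ω, (∑ s, X s) ω = (∑ s, Y s ω) - N * p := by
    intro ω
    rw [Finset.sum_apply]
    simp only [hXdef, Function.comp_apply]
    rw [Finset.sum_sub_distrib, Finset.sum_const, Finset.card_univ, Fintype.card_fin,
      nsmul_eq_mul]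
  have hset : {ω | (N : ℝ) * a ≤ (∑ s, Y s ω) - N * p}
      = {ω | (N : ℝ) * a ≤ (∑ s, X s) ω} := by
    ext ω; simp only [Set.mem_setOf_eq, hsum]
  set t : ℝ := 4 * a with htdef
  have ht : 0 ≤ t := by positivity
  have hZmeas : Measurable (∑ s, X s) := by
    have : Measurable (fun ω => ∑ s, X s ω) :=
      Finset.measurable_sum Finset.univ (fun s _ => hXmeas s)
    simpa [Finset.sum_fn] using this
  have hZbd : ∀ ω, |(∑ s, X s) ω| ≤ (N : ℝ) := by
    intro ω
    rw [Finset.sum_apply]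
    calc |∑ s, X s ω| ≤ ∑ s, |X s ω| := Finset.abs_sum_le_sum_abs _ _
      _ ≤ ∑ _s : Fin N, (1:ℝ) := by
          apply Finset.sum_le_sum
          intro s _
          simp only [hXdef, Function.comp_apply]
          rcases h01 s ω with h | h <;> rw [h, abs_le] <;> constructor <;> linarith
      _ = (N : ℝ) := by simp
  have hint : Integrable (fun ω => Real.exp (t * (∑ s, X s) ω)) P :=
    integrable_exp_of_bounded P hZmeas hZbd t
  calc (P {ω | (N : ℝ) * a ≤ (∑ s, Y s ω) - N * p}).toReal
      = (P {ω | (N : ℝ) * a ≤ (∑ s, X s) ω}).toReal := by rw [hset]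
    _ ≤ Real.exp (-t * ((N : ℝ) * a)) * mgf (∑ s, X s) P t :=
        measure_ge_le_exp_mul_mgf ((N : ℝ) * a) ht hint
    _ ≤ Real.exp (-t * ((N : ℝ) * a)) * (Real.exp (t ^ 2 / 8)) ^ (N : ℕ) := by
        apply mul_le_mul_of_nonneg_left _ (Real.exp_pos _).le
        rw [hXind.mgf_sum hXmeas]
        calc ∏ s, mgf (X s) P t ≤ ∏ _s : Fin N, Real.exp (t ^ 2 / 8) := by
              apply Finset.prod_le_prod (fun s _ => mgf_nonneg)
              intro s _
              exact bern_mgf_le P (hmeas s) (h01 s) hp0 hp1 (hmean s) t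
          _ = (Real.exp (t ^ 2 / 8)) ^ (N : ℕ) := by
              rw [Finset.prod_const, Finset.card_univ, Fintype.card_fin]
    _ = Real.exp (-2 * N * a ^ 2) := by
        rw [← Real.exp_nat_mul, ← Real.exp_add]
        congr 1
        rw [htdef]
        ring

lemma iIndepFun_precomp {Ω ι ι' : Type*} [MeasurableSpace Ω] {P : Measure Ω}
    {f : ι → Ω → ℝ} (h : iIndepFun f P)
    {g : ι' → ι} (hg : Function.Injective g) :
    iIndepFun (fun s => f (g s)) P := by
  classical
  rw [iIndepFun_iff_measure_inter_preimage_eq_mul] at h ⊢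
  intro S sets hsets
  set sets' : ι → Set ℝ := fun j =>
    if hj : ∃ s ∈ S, g s = j then sets hj.choose else Set.univ with hsets'def
  have key : ∀ s ∈ S, sets' (g s) = sets s := by
    intro s hs
    have hex : ∃ s' ∈ S, g s' = g s := ⟨s, hs, rfl⟩
    simp only [hsets'def, dif_pos hex]
    have h2 := hex.choose_spec.2
    have := hg h2
    rw [this]
  have hmeas' : ∀ j ∈ S.image g, MeasurableSet (sets' j) := by
    intro j hj
    obtain ⟨s, hs, rfl⟩ := Finset.mem_image.mp hj
    rw [key s hs]
    exact hsets s hs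
  have := h (S.image g) hmeas'
  rw [Finset.set_biInter_finset_image, Finset.prod_image
    (fun a _ b _ hab => hg hab)] at this
  calc P (⋂ s ∈ S, f (g s) ⁻¹' sets s)
      = P (⋂ s ∈ S, f (g s) ⁻¹' sets' (g s)) := by
        congr 1
        exact Set.iInter₂_congr (fun s hs => by rw [key s hs])
    _ = ∏ s ∈ S, P (f (g s) ⁻¹' sets' (g s)) := this
    _ = ∏ s ∈ S, P (f (g s) ⁻¹' sets s) :=
        Finset.prod_congr rfl (fun s hs => by rw [key s hs])

lemma meas_biInter_blocks {Ω ι κ : Type*} [MeasurableSpace Ω] {P : Measure Ω}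
    [IsProbabilityMeasure P]
    {f : ι → Ω → ℝ} (hmeas : ∀ i, Measurable (f i))
    (h : iIndepFun f P)
    (proj : ι → κ) (B : κ → Set Ω)
    (hB : ∀ m, MeasurableSet[⨆ i ∈ {i | proj i = m}, MeasurableSpace.comap (f i) inferInstance]
      (B m))
    (S : Finset κ) :
    P (⋂ m ∈ S, B m) = ∏ m ∈ S, P (B m) := by
  classical
  induction S using Finset.induction_on with
  | empty => simp
  | @insert a S' ha ih =>
    rw [Finset.set_biInter_insert, Finset.prod_insert ha, ← ih]
    have hle : ∀ i, MeasurableSpace.comap (f i) inferInstance ≤ ‹MeasurableSpace Ω› :=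
      fun i => (hmeas i).comap_le
    have hdisj : Disjoint {i : ι | proj i = a} {i : ι | proj i ∈ S'} := by
      rw [Set.disjoint_left]
      intro i h1 h2
      exact ha (h1 ▸ h2)
    have hindep := indep_iSup_of_disjoint hle h.iIndep hdisj
    have hBa := hB a
    have hrest : MeasurableSet[⨆ i ∈ {i : ι | proj i ∈ S'},
        MeasurableSpace.comap (f i) inferInstance] (⋂ m ∈ S', B m) := by
      apply MeasurableSet.biInter S'.countable_toSet
      intro m hm
      have hsub : {i : ι | proj i = m} ⊆ {i : ι | proj i ∈ S'} := by
        intro i hi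
        simp only [Set.mem_setOf_eq] at hi ⊢
        rw [hi]; exact hm
      have hlesup : (⨆ i ∈ {i : ι | proj i = m}, MeasurableSpace.comap (f i) inferInstance)
          ≤ ⨆ i ∈ {i : ι | proj i ∈ S'}, MeasurableSpace.comap (f i) inferInstance :=
        biSup_mono hsub
      exact hlesup _ (hB m)
    exact (hindep.indepSet_of_measurableSet hBa hrest).measure_inter_eq_mul

section Helpers

variable {K D : ℕ} {x : Fin K → EuclideanSpace ℝ (Fin D)}

lemma lipSet_finite (a : Fin K → ℝ) :
    {r : ℝ | ∃ i j : Fin K, i ≠ j ∧ r = |a i - a j| / dist (x i) (x j)}.Finite := by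
  apply (Set.finite_range
    (fun p : Fin K × Fin K => |a p.1 - a p.2| / dist (x p.1) (x p.2))).subset
  rintro r ⟨i, j, _, rfl⟩
  exact ⟨(i, j), rfl⟩

lemma distSet_finite :
    {r : ℝ | ∃ i j : Fin K, i ≠ j ∧ r = dist (x i) (x j)}.Finite := by
  apply (Set.finite_range
    (fun p : Fin K × Fin K => dist (x p.1) (x p.2))).subset
  rintro r ⟨i, j, _, rfl⟩
  exact ⟨(i, j), rfl⟩

lemma pair_exists (hK : 2 ≤ K) : ∃ i j : Fin K, i ≠ j := by
  refine ⟨⟨0, by omega⟩, ⟨1, by omega⟩, ?_⟩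
  simp [Fin.ext_iff]

lemma le_lipConst (a : Fin K → ℝ) {i j : Fin K} (hij : i ≠ j) :
    |a i - a j| / dist (x i) (x j) ≤ lipConst x a :=
  le_csSup (lipSet_finite a).bddAbove ⟨i, j, hij, rfl⟩

lemma lipConst_mem (hK : 2 ≤ K) (a : Fin K → ℝ) :
    ∃ i j : Fin K, i ≠ j ∧ lipConst x a = |a i - a j| / dist (x i) (x j) := by
  obtain ⟨i, j, hij⟩ := pair_exists hK
  have hne : {r : ℝ | ∃ i j : Fin K, i ≠ j ∧ r = |a i - a j| / dist (x i) (x j)}.Nonempty :=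
    ⟨|a i - a j| / dist (x i) (x j), ⟨i, j, hij, rfl⟩⟩
  exact hne.csSup_mem (lipSet_finite a)

lemma Δemb_le {i j : Fin K} (hij : i ≠ j) : Δemb x ≤ dist (x i) (x j) :=
  csInf_le (distSet_finite).bddBelow ⟨i, j, hij, rfl⟩

lemma Δemb_pos (hK : 2 ≤ K) (hx : Function.Injective x) : 0 < Δemb x := by
  obtain ⟨i, j, hij⟩ := pair_exists hK
  have hne : {r : ℝ | ∃ i j : Fin K, i ≠ j ∧ r = dist (x i) (x j)}.Nonempty :=
    ⟨dist (x i) (x j), ⟨i, j, hij, rfl⟩⟩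
  have hmem := hne.csInf_mem distSet_finite
  obtain ⟨i', j', hij', heq⟩ := hmem
  rw [Δemb, heq]
  exact dist_pos.mpr (fun h => hij' (hx h))

lemma kthLargest_gt {M : ℕ} (f : Fin M → ℝ) {k : ℕ} (hk : 1 ≤ k) (hM : 1 ≤ M) {b : ℝ}
    (T : Finset (Fin M)) (hcard : k ≤ T.card) (hT : ∀ m ∈ T, b < f m) :
    b < kthLargest f k := by
  classical
  have : Nonempty (Fin M) := ⟨⟨0, hM⟩⟩
  have hTne : T.Nonempty := Finset.card_pos.mp (lt_of_lt_of_le hk hcard)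
  set t₀ := T.inf' hTne f with ht₀
  have ht₀b : b < t₀ := (Finset.lt_inf'_iff hTne).mpr hT
  have hmem : t₀ ∈ {t : ℝ | k ≤ (Finset.univ.filter (fun m => t ≤ f m)).card} := by
    refine le_trans hcard (Finset.card_le_card ?_)
    intro m hm
    rw [Finset.mem_filter]
    exact ⟨Finset.mem_univ m, Finset.inf'_le f hm⟩
  have hbdd : BddAbove {t : ℝ | k ≤ (Finset.univ.filter (fun m => t ≤ f m)).card} := by
    refine ⟨Finset.univ.sup' Finset.univ_nonempty f, fun t ht => ?_⟩
    have : (Finset.univ.filter (fun m => t ≤ f m)).Nonempty :=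
      Finset.card_pos.mp (lt_of_lt_of_le hk ht)
    obtain ⟨m, hm⟩ := this
    rw [Finset.mem_filter] at hm
    exact le_trans hm.2 (Finset.le_sup' f (Finset.mem_univ m))
  exact lt_of_lt_of_le ht₀b (le_csSup hbdd hmem)

end Helpers

set_option maxHeartbeats 1000000 in
theorem stmt9 {K D M : ℕ} (hK : 2 ≤ K) (hM : 1 ≤ M)
    (x : Fin K → EuclideanSpace ℝ (Fin D))
    (hx : Function.Injective x)
    (hcube : ∀ i t, x i t ∈ Set.Icc (0:ℝ) 1)
    (L : ℝ) (hL : 0 < L)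
    (μv : Fin M → Fin K → ℝ) (hμ : ∀ m, μv m ∈ Phi x L)
    (α εα : ℝ) (hα0 : 0 < α) (hα1 : α ≤ 1) (hεα : 0 < εα)
    (hlearn : α * M ≤
      ((Finset.univ.filter (fun m => L - εα ≤ lipConst x (μv m))).card : ℝ))
    (β εβ : ℝ) (hβ0 : 0 < β) (hβα : β < α) (hεβ : εα < εβ)
    (τ : ℝ) (hτ0 : 0 < τ)
    (n : Fin M → Fin K → ℕ) (hn : ∀ m i, τ ≤ (n m i : ℝ))
    (hτ : 4 / ((Δemb x) ^ 2 * (εβ - εα) ^ 2) *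
            (Real.log (2 * K) + 1 / (α - β)) ≤ τ)
    {Ω : Type*} [MeasurableSpace Ω] (P : Measure Ω) [IsProbabilityMeasure P]
    (r : (Σ m : Fin M, Σ i : Fin K, Fin (n m i)) → Ω → ℝ)
    (hmeas : ∀ idx, Measurable (r idx))
    (h01 : ∀ idx ω, r idx ω = 0 ∨ r idx ω = 1)
    (hmean : ∀ idx, P {ω | r idx ω = 1} = ENNReal.ofReal (μv idx.1 idx.2.1))
    (hindep : iIndepFun r P) :
    (P {ω |
        kthLargest (fun m => lipConst x (fun i => empMean r m i ω)) ⌈β * (M : ℝ)⌉₊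
          ≤ L - εβ}).toReal
    ≤ Real.exp (-(τ * (Δemb x) ^ 2 * (εβ - εα) ^ 2 / 4) * (α - β) * M) := by
  classical
  set Δ : ℝ := Δemb x with hΔdef
  have hΔpos : 0 < Δ := Δemb_pos hK hx
  set ε' : ℝ := εβ - εα with hε'def
  have hε'pos : 0 < ε' := by rw [hε'def]; linarith
  set s₀ : ℝ := ε' * Δ / 2 with hs₀def
  have hs₀pos : 0 < s₀ := by rw [hs₀def]; positivity
  have hMpos : (0:ℝ) < M := by exact_mod_cast hM
  have hKpos : (0:ℝ) < K := by exact_mod_cast (by omega : 0 < K)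
  have hαβ : (0:ℝ) < α - β := by linarith
  set c : ℝ := τ * Δ ^ 2 * ε' ^ 2 / 4 with hcdef
  have hcpos : 0 < c := by rw [hcdef]; positivity
  have hc : Real.log (2 * K) + 1 / (α - β) ≤ c := by
    have h4 : (0:ℝ) < Δ ^ 2 * ε' ^ 2 := by positivity
    have h6 := mul_le_mul_of_nonneg_right hτ h4.le
    have h7 : 4 / (Δ ^ 2 * ε' ^ 2) * (Real.log (2 * K) + 1 / (α - β)) * (Δ ^ 2 * ε' ^ 2)
        = 4 * (Real.log (2 * K) + 1 / (α - β)) := by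
      field_simp
    rw [h7] at h6
    rw [hcdef]
    have h8 : τ * Δ ^ 2 * ε' ^ 2 = τ * (Δ ^ 2 * ε' ^ 2) := by ring
    rw [h8]
    linarith
  -- the good episodes
  set G : Finset (Fin M) := Finset.univ.filter (fun m => L - εα ≤ lipConst x (μv m)) with hGdef
  set g : ℕ := G.card with hgdef
  set k : ℕ := ⌈β * (M : ℝ)⌉₊ with hkdef
  have hk1 : 1 ≤ k := by
    rw [hkdef]
    exact Nat.ceil_pos.mpr (by positivity)
  have hkg : k ≤ g := by
    rw [hkdef]
    apply Nat.ceil_le.mpr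
    calc β * M ≤ α * M := mul_le_mul_of_nonneg_right hβα.le hMpos.le
      _ ≤ g := hlearn
  set N : ℕ := g + 1 - k with hNdef
  have hNcast : (N:ℝ) = (g:ℝ) + 1 - k := by
    rw [hNdef]
    have : k ≤ g + 1 := by omega
    push_cast [Nat.cast_sub this]
    ring
  have hNge : (α - β) * M ≤ (N:ℝ) := by
    have hkle : (k:ℝ) < β * M + 1 := by
      rw [hkdef]
      exact Nat.ceil_lt_add_one (by positivity)
    have hexp : (α - β) * M = α * M - β * M := by ring
    rw [hNcast, hexp]
    linarith
  have hNpos : (0:ℝ) ≤ N := Nat.cast_nonneg N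
  -- the bad events
  set B : Fin M → Set Ω := fun m => {ω | ∃ i : Fin K, s₀ ≤ |empMean r m i ω - μv m i|}
    with hBdef
  set p₀ : ℝ := 2 * K * Real.exp (-2 * τ * s₀ ^ 2) with hp₀def
  have hp₀pos : 0 < p₀ := by rw [hp₀def]; positivity
  -- probability of each bad event
  have hPB : ∀ m, P (B m) ≤ ENNReal.ofReal p₀ := by
    intro m
    have htail : ∀ i : Fin K,
        P {ω | s₀ ≤ empMean r m i ω - μv m i}
            ≤ ENNReal.ofReal (Real.exp (-2 * τ * s₀ ^ 2))
        ∧ P {ω | s₀ ≤ μv m i - empMean r m i ω}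
            ≤ ENNReal.ofReal (Real.exp (-2 * τ * s₀ ^ 2)) := by
      intro i
      have hNn : (0:ℝ) < (n m i : ℝ) := lt_of_lt_of_le hτ0 (hn m i)
      set p : ℝ := μv m i with hpdef
      have hp0 : 0 ≤ p := ((hμ m).1 i).1
      have hp1 : p ≤ 1 := ((hμ m).1 i).2
      set Y : Fin (n m i) → Ω → ℝ := fun s => r ⟨m, i, s⟩ with hYdef
      have hginj : Function.Injective
          (fun s : Fin (n m i) => (⟨m, i, s⟩ : Σ m : Fin M, Σ i : Fin K, Fin (n m i))) := by
        intro a b hab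
        simpa using hab
      have hYind : iIndepFun Y P := iIndepFun_precomp hindep hginj
      have hYmeas : ∀ s, Measurable (Y s) := fun s => hmeas _
      have hY01 : ∀ s ω, Y s ω = 0 ∨ Y s ω = 1 := fun s ω => h01 _ ω
      have hYmean : ∀ s, P {ω | Y s ω = 1} = ENNReal.ofReal p := fun s => hmean ⟨m, i, s⟩
      have hexpmono : Real.exp (-2 * (n m i) * s₀ ^ 2) ≤ Real.exp (-2 * τ * s₀ ^ 2) := by
        apply Real.exp_le_exp.mpr
        have h := mul_le_mul_of_nonneg_right (hn m i) (sq_nonneg s₀)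
        linarith
      constructor
      · -- upper tail
        have hset : {ω | s₀ ≤ empMean r m i ω - p}
            = {ω | ((n m i : ℝ)) * s₀ ≤ (∑ s, Y s ω) - (n m i) * p} := by
          ext ω
          simp only [Set.mem_setOf_eq]
          have h1 : empMean r m i ω - p = ((∑ s, Y s ω) - (n m i) * p) / (n m i) := by
            rw [empMean]
            field_simp
            rfl
          rw [h1, le_div_iff₀ hNn, mul_comm]
        rw [hset, ← ENNReal.ofReal_toReal (measure_ne_top P _)]
        apply ENNReal.ofReal_le_ofReal
        exact le_trans (bern_tail P Y hYmeas hY01 hp0 hp1 hYmean hYind hs₀pos.le) hexpmono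
      · -- lower tail
        set Y' : Fin (n m i) → Ω → ℝ := fun s => (fun v => 1 - v) ∘ (Y s) with hY'def
        have hY'ind : iIndepFun Y' P :=
          hYind.comp _ (fun _ => measurable_const.sub measurable_id)
        have hY'meas : ∀ s, Measurable (Y' s) := fun s =>
          measurable_const.sub (hYmeas s)
        have hY'01 : ∀ s ω, Y' s ω = 0 ∨ Y' s ω = 1 := by
          intro s ω
          rcases hY01 s ω with h | h <;> simp [hY'def, h]
        have hY'mean : ∀ s, P {ω | Y' s ω = 1} = ENNReal.ofReal (1 - p) := by
          intro s
          have hset0 : {ω | Y' s ω = 1} = {ω | Y s ω = 1}ᶜ := by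
            ext ω
            simp only [hY'def, Function.comp_apply, Set.mem_setOf_eq, Set.mem_compl_iff]
            constructor
            · intro h h1
              rw [h1] at h
              norm_num at h
            · intro h
              rcases hY01 s ω with h2 | h2
              · rw [h2]; ring
              · exact absurd h2 h
          have hms : MeasurableSet {ω | Y s ω = 1} := hYmeas s (measurableSet_singleton 1)
          rw [hset0, prob_compl_eq_one_sub hms,
            hYmean s, ENNReal.ofReal_sub 1 hp0, ENNReal.ofReal_one]
        have hset : {ω | s₀ ≤ p - empMean r m i ω}
            = {ω | ((n m i : ℝ)) * s₀ ≤ (∑ s, Y' s ω) - (n m i) * (1 - p)} := by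
          ext ω
          simp only [Set.mem_setOf_eq]
          have h2 : ∀ ω, (∑ s, Y' s ω) = (n m i : ℝ) - ∑ s, Y s ω := by
            intro ω
            simp only [hY'def, Function.comp_apply]
            rw [Finset.sum_sub_distrib, Finset.sum_const, Finset.card_univ, Fintype.card_fin,
              nsmul_eq_mul, mul_one]
          have h1 : p - empMean r m i ω
              = ((∑ s, Y' s ω) - (n m i) * (1 - p)) / (n m i) := by
            rw [h2 ω, empMean]
            field_simp
            ring
          rw [h1, le_div_iff₀ hNn, mul_comm]
        rw [hset, ← ENNReal.ofReal_toReal (measure_ne_top P _)]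
        apply ENNReal.ofReal_le_ofReal
        exact le_trans (bern_tail P Y' hY'meas hY'01 (by linarith) (by linarith) hY'mean
          hY'ind hs₀pos.le) hexpmono
    -- union over arms
    have hsub : B m ⊆ ⋃ i : Fin K,
        ({ω | s₀ ≤ empMean r m i ω - μv m i} ∪ {ω | s₀ ≤ μv m i - empMean r m i ω}) := by
      rintro ω ⟨i, hi⟩
      apply Set.mem_iUnion.mpr
      refine ⟨i, ?_⟩
      rcases le_abs.mp hi with h | h
      · exact Or.inl h
      · exact Or.inr (by rw [neg_sub] at h; exact h)
    calc P (B m) ≤ P (⋃ i : Fin K,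
          ({ω | s₀ ≤ empMean r m i ω - μv m i} ∪ {ω | s₀ ≤ μv m i - empMean r m i ω})) :=
          measure_mono hsub
      _ ≤ ∑ i : Fin K, P ({ω | s₀ ≤ empMean r m i ω - μv m i}
            ∪ {ω | s₀ ≤ μv m i - empMean r m i ω}) := measure_iUnion_fintype_le _ _
      _ ≤ ∑ _i : Fin K, (ENNReal.ofReal (Real.exp (-2 * τ * s₀ ^ 2))
            + ENNReal.ofReal (Real.exp (-2 * τ * s₀ ^ 2))) :=
          Finset.sum_le_sum (fun i _ => le_trans (measure_union_le _ _)
            (add_le_add (htail i).1 (htail i).2))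
      _ = ENNReal.ofReal p₀ := by
          have hKcast : ((K : ℕ) : ENNReal) = ENNReal.ofReal (K : ℝ) :=
            (ENNReal.ofReal_natCast K).symm
          rw [Finset.sum_const, Finset.card_univ, Fintype.card_fin, nsmul_eq_mul,
            ← ENNReal.ofReal_add (Real.exp_pos _).le (Real.exp_pos _).le,
            hKcast, ← ENNReal.ofReal_mul (Nat.cast_nonneg K)]
          congr 1
          rw [hp₀def]
          ring
  -- measurability of bad events w.r.t. their episode block
  have hBfib : ∀ m, MeasurableSet[⨆ idx ∈ {idx : (Σ m : Fin M, Σ i : Fin K, Fin (n m i)) |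
      idx.1 = m}, MeasurableSpace.comap (r idx) inferInstance] (B m) := by
    intro m
    set mm := ⨆ idx ∈ {idx : (Σ m : Fin M, Σ i : Fin K, Fin (n m i)) | idx.1 = m},
      MeasurableSpace.comap (r idx) inferInstance with hmm
    have hr : ∀ (i : Fin K) (s : Fin (n m i)), Measurable[mm] (r ⟨m, i, s⟩) := by
      intro i s
      apply Measurable.of_comap_le
      exact le_biSup (fun idx => MeasurableSpace.comap (r idx) inferInstance)
        (show (⟨m, i, s⟩ : Σ m : Fin M, Σ i : Fin K, Fin (n m i)) ∈ {idx | idx.1 = m} from rfl)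
    have hemp : ∀ i : Fin K, Measurable[mm] (fun ω => empMean r m i ω) := by
      intro i
      have hsum : Measurable[mm] (fun ω => ∑ s : Fin (n m i), r ⟨m, i, s⟩ ω) :=
        Finset.measurable_sum _ (fun s _ => hr i s)
      exact hsum.div_const _
    have hBeq : B m = ⋃ i : Fin K, {ω | s₀ ≤ |empMean r m i ω - μv m i|} := by
      rw [hBdef]
      exact Set.setOf_exists _
    rw [hBeq]
    exact MeasurableSet.iUnion (fun i =>
      measurableSet_le measurable_const ((hemp i).sub measurable_const).abs)
  have hprod : ∀ S : Finset (Fin M), P (⋂ m ∈ S, B m) = ∏ m ∈ S, P (B m) :=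
    meas_biInter_blocks hmeas hindep Sigma.fst B hBfib
  -- deterministic: off the bad event, good episodes have large empirical lipConst
  have hgood : ∀ (ω : Ω), ∀ m ∈ G, ω ∉ B m →
      L - εβ < lipConst x (fun i => empMean r m i ω) := by
    intro ω m hmG hω
    obtain ⟨i, j, hij, heq⟩ := lipConst_mem hK (μv m)
    have hdev : ∀ i', |empMean r m i' ω - μv m i'| < s₀ := by
      intro i'
      by_contra h
      exact hω ⟨i', not_lt.mp h⟩
    have hdΔ : Δ ≤ dist (x i) (x j) := Δemb_le hij
    have hdpos : 0 < dist (x i) (x j) := lt_of_lt_of_le hΔpos hdΔ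
    have htri : |μv m i - μv m j| ≤ |empMean r m i ω - μv m i|
        + |empMean r m i ω - empMean r m j ω| + |empMean r m j ω - μv m j| := by
      have h1 : μv m i - μv m j = -(empMean r m i ω - μv m i)
          + (empMean r m i ω - empMean r m j ω) + (empMean r m j ω - μv m j) := by ring
      calc |μv m i - μv m j| = |(-(empMean r m i ω - μv m i)
            + (empMean r m i ω - empMean r m j ω)) + (empMean r m j ω - μv m j)| := by
            rw [h1]
        _ ≤ |(-(empMean r m i ω - μv m i)) + (empMean r m i ω - empMean r m j ω)|
            + |empMean r m j ω - μv m j| := abs_add_le _ _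
        _ ≤ |empMean r m i ω - μv m i| + |empMean r m i ω - empMean r m j ω|
            + |empMean r m j ω - μv m j| := by
            have := abs_add_le (-(empMean r m i ω - μv m i))
              (empMean r m i ω - empMean r m j ω)
            rw [abs_neg] at this
            linarith
    have h4 : lipConst x (μv m) * dist (x i) (x j) = |μv m i - μv m j| := by
      rw [heq, div_mul_cancel₀ _ hdpos.ne']
    have hnum : lipConst x (μv m) * dist (x i) (x j) - 2 * s₀
        < |empMean r m i ω - empMean r m j ω| := by
      have h2 := hdev i
      have h3 := hdev j
      linarith [htri, h4]
    have hstep : lipConst x (μv m) - ε'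
        < |empMean r m i ω - empMean r m j ω| / dist (x i) (x j) := by
      rw [lt_div_iff₀ hdpos]
      have h5 : ε' * Δ ≤ ε' * dist (x i) (x j) :=
        mul_le_mul_of_nonneg_left hdΔ hε'pos.le
      have h6 : 2 * s₀ = ε' * Δ := by rw [hs₀def]; ring
      have h7 : (lipConst x (μv m) - ε') * dist (x i) (x j)
          = lipConst x (μv m) * dist (x i) (x j) - ε' * dist (x i) (x j) := by ring
      rw [h7]
      linarith
    have hle := le_lipConst (x := x) (fun i' => empMean r m i' ω) hij
    have hLm : L - εα ≤ lipConst x (μv m) := (Finset.mem_filter.mp hmG).2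
    calc L - εβ = (L - εα) - ε' := by rw [hε'def]; ring
      _ ≤ lipConst x (μv m) - ε' := by linarith
      _ < |empMean r m i ω - empMean r m j ω| / dist (x i) (x j) := hstep
      _ ≤ _ := hle
  -- counting: the event forces many bad episodes
  have hEsub : {ω | kthLargest (fun m => lipConst x (fun i => empMean r m i ω)) k ≤ L - εβ}
      ⊆ ⋃ S ∈ Finset.powersetCard N G, ⋂ m ∈ S, B m := by
    intro ω hω
    simp only [Set.mem_setOf_eq] at hω
    have hTk : (G.filter (fun m => ¬ ω ∈ B m)).card < k := by
      by_contra hcon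
      push_neg at hcon
      have := kthLargest_gt (fun m => lipConst x (fun i => empMean r m i ω)) hk1 hM
        (G.filter (fun m => ¬ ω ∈ B m)) hcon
        (fun m hm => hgood ω m (Finset.mem_filter.mp hm).1 (Finset.mem_filter.mp hm).2)
      linarith
    have hsplit := Finset.card_filter_add_card_filter_not
      (s := G) (p := fun m => ω ∈ B m)
    have hgG : G.card = g := hgdef.symm
    have hNle : N ≤ (G.filter (fun m => ω ∈ B m)).card := by
      rw [hNdef]
      omega
    obtain ⟨S, hSsub, hScard⟩ := Finset.exists_subset_card_eq hNle
    have hSpow : S ∈ Finset.powersetCard N G :=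
      Finset.mem_powersetCard.mpr ⟨hSsub.trans (Finset.filter_subset _ _), hScard⟩
    exact Set.mem_iUnion₂.mpr ⟨S, hSpow,
      Set.mem_iInter₂.mpr (fun m hm => (Finset.mem_filter.mp (hSsub hm)).2)⟩
  -- measure bound
  have hmain : P {ω | kthLargest (fun m => lipConst x (fun i => empMean r m i ω)) k ≤ L - εβ}
      ≤ (g.choose N : ENNReal) * ENNReal.ofReal p₀ ^ N := by
    calc P {ω | kthLargest (fun m => lipConst x (fun i => empMean r m i ω)) k ≤ L - εβ}
        ≤ P (⋃ S ∈ Finset.powersetCard N G, ⋂ m ∈ S, B m) := measure_mono hEsub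
      _ ≤ ∑ S ∈ Finset.powersetCard N G, P (⋂ m ∈ S, B m) :=
          measure_biUnion_finset_le _ _
      _ ≤ ∑ S2 ∈ Finset.powersetCard N G, ENNReal.ofReal p₀ ^ N := by
          apply Finset.sum_le_sum
          intro S hS
          rw [hprod S]
          obtain ⟨hsub, hcard⟩ := Finset.mem_powersetCard.mp hS
          calc ∏ m ∈ S, P (B m) ≤ ∏ m2 ∈ S, ENNReal.ofReal p₀ :=
              Finset.prod_le_prod' (fun m _ => hPB m)
            _ = ENNReal.ofReal p₀ ^ N := by rw [Finset.prod_const, hcard]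
      _ = (g.choose N : ENNReal) * ENNReal.ofReal p₀ ^ N := by
          rw [Finset.sum_const, Finset.card_powersetCard, nsmul_eq_mul, hgdef]
  have hfin : (g.choose N : ENNReal) * ENNReal.ofReal p₀ ^ N ≠ ⊤ :=
    ENNReal.mul_ne_top (ENNReal.natCast_ne_top _) (ENNReal.pow_ne_top ENNReal.ofReal_ne_top)
  have h9 : (P {ω | kthLargest (fun m => lipConst x (fun i => empMean r m i ω)) k
      ≤ L - εβ}).toReal ≤ (g.choose N : ℝ) * p₀ ^ N := by
    have h10 := ENNReal.toReal_mono hfin hmain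
    rwa [ENNReal.toReal_mul, ENNReal.toReal_pow, ENNReal.toReal_natCast,
      ENNReal.toReal_ofReal hp₀pos.le] at h10
  refine h9.trans ?_
  -- final real arithmetic
  have hgM : g ≤ M := by
    rw [hgdef, hGdef]
    exact le_trans (Finset.card_filter_le _ _) (le_of_eq (by simp))
  have hchoose : (g.choose N : ℝ) ≤ 2 ^ M := by
    have h1 : g.choose N ≤ 2 ^ g := by
      rcases le_or_gt N g with h | h
      · calc g.choose N ≤ ∑ m ∈ Finset.range (g + 1), g.choose m :=
            Finset.single_le_sum (f := fun m => g.choose m) (fun m _ => Nat.zero_le _)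
              (Finset.mem_range.mpr (by omega))
          _ = 2 ^ g := Nat.sum_range_choose g
      · rw [Nat.choose_eq_zero_of_lt h]
        exact Nat.zero_le _
    have h2 : (2:ℕ) ^ g ≤ 2 ^ M := Nat.pow_le_pow_right (by norm_num) hgM
    exact_mod_cast le_trans h1 h2
  have hppow : (0:ℝ) < p₀ ^ N := pow_pos hp₀pos N
  have hstep1 : (g.choose N : ℝ) * p₀ ^ N ≤ 2 ^ M * p₀ ^ N :=
    mul_le_mul_of_nonneg_right hchoose hppow.le
  refine hstep1.trans ?_
  have h2M : (2:ℝ) ^ M = Real.exp (M * Real.log 2) := by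
    rw [← Real.exp_log (by norm_num : (0:ℝ) < 2), ← Real.exp_nat_mul, Real.log_exp]
  have hpN : p₀ ^ N = Real.exp ((N:ℝ) * Real.log p₀) := by
    rw [Real.exp_nat_mul, Real.exp_log hp₀pos]
  rw [h2M, hpN, ← Real.exp_add]
  apply Real.exp_le_exp.mpr
  have hlogp₀ : Real.log p₀ ≤ -c - 1 / (α - β) := by
    have h2c : -2 * τ * s₀ ^ 2 = -(2 * c) := by rw [hs₀def, hcdef]; ring
    rw [hp₀def, Real.log_mul (by positivity) (Real.exp_ne_zero _), Real.log_exp, h2c]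
    linarith
  have hlog2 : Real.log 2 ≤ 1 := by
    have := Real.log_le_sub_one_of_pos (by norm_num : (0:ℝ) < 2)
    linarith
  have hA : c * ((α - β) * M) ≤ c * N := mul_le_mul_of_nonneg_left hNge hcpos.le
  have hB2 : (α - β) * M * (1 / (α - β)) ≤ (N:ℝ) * (1 / (α - β)) :=
    mul_le_mul_of_nonneg_right hNge (by positivity)
  have hB3 : (α - β) * M * (1 / (α - β)) = M := by field_simp
  have hNlog : (N:ℝ) * Real.log p₀ ≤ (N:ℝ) * (-c - 1 / (α - β)) :=
    mul_le_mul_of_nonneg_left hlogp₀ hNpos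
  have hMlog : (M:ℝ) * Real.log 2 ≤ M := by
    have := mul_le_mul_of_nonneg_left hlog2 hMpos.le
    linarith
  have hexp1 : (N:ℝ) * (-c - 1 / (α - β)) = -(c * N) - N * (1 / (α - β)) := by ring
  have hexp2 : -c * (α - β) * M = -(c * ((α - β) * M)) := by ring
  rw [hexp2]
  rw [hexp1] at hNlog
  linarith
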